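/- The Toeplitz Bezoutian commuting identity: B_T D_L^{-1} D_U = D_U D_L^{-1} B_T, where B_T = D_L N_U − N_L D_U and D_L is invertible (e.g. d_1 ≠ 0). -/

import Mathlib

/-- Extend a function on `Fin (m+1)` to `ℕ` by zero. -/
def bezExt (m : ℕ) (f : Fin (m + 1) → ℝ) : ℕ → ℝ :=
  fun a => if ha : a ≤ m then f ⟨a, Nat.lt_succ_of_le ha⟩ else 0

lemma bezExt_eq (m : ℕ) (f : Fin (m + 1) → ℝ) (a : ℕ) (h : a ≤ m) :
    bezExt m f a = f ⟨a, Nat.lt_succ_of_le h⟩ := dif_pos h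

/-- lower triangular Toeplitz commute, entrywise. -/
lemma bez_lower (m : ℕ) (F G : ℕ → ℝ) (i j : Fin m) :
    (∑ k : Fin m, (if k.val ≤ i.val then F (i.val - k.val) else 0) *
      (if j.val ≤ k.val then G (k.val - j.val) else 0)) =
    (∑ k : Fin m, (if k.val ≤ i.val then G (i.val - k.val) else 0) *
      (if j.val ≤ k.val then F (k.val - j.val) else 0)) := by
  set f : Fin m → Fin m := fun k =>
      if h : j.val ≤ k.val ∧ k.val ≤ i.val then (⟨i.val + j.val - k.val, by omega⟩ : Fin m) else k
    with hfdef
  have hf : ∀ k (h : j.val ≤ k.val ∧ k.val ≤ i.val), f k = ⟨i.val + j.val - k.val, by omega⟩ := by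
    intro k h; rw [hfdef]; exact dif_pos h
  have hf' : ∀ k, ¬(j.val ≤ k.val ∧ k.val ≤ i.val) → f k = k := by
    intro k h; rw [hfdef]; exact dif_neg h
  have hfinv : Function.Involutive f := by
    intro k
    by_cases h : j.val ≤ k.val ∧ k.val ≤ i.val
    · rw [hf k h, hf _ (by simp only [Fin.val_mk]; omega)]
      ext; simp only [Fin.val_mk]; omega
    · rw [hf' k h, hf' k h]
  refine Fintype.sum_bijective f hfinv.bijective _ _ (fun k => ?_)
  by_cases h : j.val ≤ k.val ∧ k.val ≤ i.val
  · rw [hf k h]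
    simp only [Fin.val_mk]
    rw [if_pos h.2, if_pos h.1, if_pos (by omega), if_pos (by omega), mul_comm]
    congr 1 <;> congr 1 <;> omega
  · rw [hf' k h]
    rcases not_and_or.mp h with h2 | h2
    · rw [if_neg h2, mul_zero, if_neg h2, mul_zero]
    · rw [if_neg h2, zero_mul, if_neg h2, zero_mul]


/-- upper triangular Toeplitz commute, entrywise. -/
lemma bez_upper (m : ℕ) (F G : ℕ → ℝ) (i j : Fin m) :
    (∑ k : Fin m, (if i.val ≤ k.val then F (m + i.val - k.val) else 0) *
      (if k.val ≤ j.val then G (m + k.val - j.val) else 0)) =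
    (∑ k : Fin m, (if i.val ≤ k.val then G (m + i.val - k.val) else 0) *
      (if k.val ≤ j.val then F (m + k.val - j.val) else 0)) := by
  set f : Fin m → Fin m := fun k =>
      if h : i.val ≤ k.val ∧ k.val ≤ j.val then (⟨i.val + j.val - k.val, by omega⟩ : Fin m) else k
    with hfdef
  have hf : ∀ k (h : i.val ≤ k.val ∧ k.val ≤ j.val), f k = ⟨i.val + j.val - k.val, by omega⟩ := by
    intro k h; rw [hfdef]; exact dif_pos h
  have hf' : ∀ k, ¬(i.val ≤ k.val ∧ k.val ≤ j.val) → f k = k := by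
    intro k h; rw [hfdef]; exact dif_neg h
  have hfinv : Function.Involutive f := by
    intro k
    by_cases h : i.val ≤ k.val ∧ k.val ≤ j.val
    · rw [hf k h, hf _ (by simp only [Fin.val_mk]; omega)]
      ext; simp only [Fin.val_mk]; omega
    · rw [hf' k h, hf' k h]
  refine Fintype.sum_bijective f hfinv.bijective _ _ (fun k => ?_)
  by_cases h : i.val ≤ k.val ∧ k.val ≤ j.val
  · rw [hf k h]
    simp only [Fin.val_mk]
    rw [if_pos h.1, if_pos h.2, if_pos (by omega), if_pos (by omega), mul_comm]
    congr 1 <;> congr 1 <;> omega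
  · rw [hf' k h]
    rcases not_and_or.mp h with h2 | h2
    · rw [if_neg h2, zero_mul, if_neg h2, zero_mul]
    · rw [if_neg h2, mul_zero, if_neg h2, mul_zero]


set_option maxHeartbeats 1000000 in
/-- Gohberg–Semencul identity, entrywise. -/
lemma bez_gs (m : ℕ) (F G : ℕ → ℝ) (i j : Fin m) :
    ((∑ k : Fin m, (if k.val ≤ i.val then F (i.val - k.val) else 0) *
        (if k.val ≤ j.val then G (m + k.val - j.val) else 0)) +
     (∑ k : Fin m, (if i.val ≤ k.val then F (m + i.val - k.val) else 0) *
        (if j.val ≤ k.val then G (k.val - j.val) else 0))) =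
    ((∑ k : Fin m, (if i.val ≤ k.val then G (m + i.val - k.val) else 0) *
        (if j.val ≤ k.val then F (k.val - j.val) else 0)) +
     (∑ k : Fin m, (if k.val ≤ i.val then G (i.val - k.val) else 0) *
        (if k.val ≤ j.val then F (m + k.val - j.val) else 0))) := by
  rw [← Finset.sum_add_distrib, ← Finset.sum_add_distrib]
  set f : Fin m → Fin m := fun k =>
      if h1 : k.val ≤ i.val ∧ k.val ≤ j.val then
        (if h2 : m + k.val ≤ i.val + j.val then (⟨i.val + j.val - m - k.val, by omega⟩ : Fin m)
         else ⟨i.val + j.val - k.val, by omega⟩)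
      else if h3 : i.val ≤ k.val ∧ j.val ≤ k.val then
        (if h4 : k.val ≤ i.val + j.val then (⟨i.val + j.val - k.val, by omega⟩ : Fin m)
         else ⟨m + i.val + j.val - k.val, by omega⟩)
      else k
    with hfdef
  have hf1 : ∀ k : Fin m, ∀ (h1 : k.val ≤ i.val) (h2 : k.val ≤ j.val) (h3 : m + k.val ≤ i.val + j.val),
      f k = ⟨i.val + j.val - m - k.val, by omega⟩ := by
    intro k h1 h2 h3; simp only [hfdef]; rw [dif_pos ⟨h1, h2⟩, dif_pos h3]
  have hf2 : ∀ k : Fin m, ∀ (h1 : k.val ≤ i.val) (h2 : k.val ≤ j.val) (h3 : ¬(m + k.val ≤ i.val + j.val)),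
      f k = ⟨i.val + j.val - k.val, by omega⟩ := by
    intro k h1 h2 h3; simp only [hfdef]; rw [dif_pos ⟨h1, h2⟩, dif_neg h3]
  have hf3 : ∀ k : Fin m, ∀ (h1 : ¬(k.val ≤ i.val ∧ k.val ≤ j.val)) (h2 : i.val ≤ k.val) (h3 : j.val ≤ k.val)
      (h4 : k.val ≤ i.val + j.val), f k = ⟨i.val + j.val - k.val, by omega⟩ := by
    intro k h1 h2 h3 h4; simp only [hfdef]; rw [dif_neg h1, dif_pos ⟨h2, h3⟩, dif_pos h4]
  have hf4 : ∀ k : Fin m, ∀ (h1 : ¬(k.val ≤ i.val ∧ k.val ≤ j.val)) (h2 : i.val ≤ k.val) (h3 : j.val ≤ k.val)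
      (h4 : ¬(k.val ≤ i.val + j.val)), f k = ⟨m + i.val + j.val - k.val, by omega⟩ := by
    intro k h1 h2 h3 h4; simp only [hfdef]; rw [dif_neg h1, dif_pos ⟨h2, h3⟩, dif_neg h4]
  have hf5 : ∀ k : Fin m, ∀ (h1 : ¬(k.val ≤ i.val ∧ k.val ≤ j.val)) (h2 : ¬(i.val ≤ k.val ∧ j.val ≤ k.val)),
      f k = k := by
    intro k h1 h2; simp only [hfdef]; rw [dif_neg h1, dif_neg h2]
  have hfinv : Function.Involutive f := by
    intro k
    by_cases h1 : k.val ≤ i.val ∧ k.val ≤ j.val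
    · by_cases h2 : m + k.val ≤ i.val + j.val
      · rw [hf1 k h1.1 h1.2 h2, hf1 _ (by simp only [Fin.val_mk]; omega)
          (by simp only [Fin.val_mk]; omega) (by simp only [Fin.val_mk]; omega)]
        ext; simp only [Fin.val_mk]; omega
      · by_cases hkk : k.val = i.val ∧ k.val = j.val
        · rw [hf2 k h1.1 h1.2 h2, hf2 _ (by simp only [Fin.val_mk]; omega)
            (by simp only [Fin.val_mk]; omega) (by simp only [Fin.val_mk]; omega)]
          ext; simp only [Fin.val_mk]; omega
        · rw [hf2 k h1.1 h1.2 h2, hf3 _ (by simp only [Fin.val_mk]; omega)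
            (by simp only [Fin.val_mk]; omega) (by simp only [Fin.val_mk]; omega)
            (by simp only [Fin.val_mk]; omega)]
          ext; simp only [Fin.val_mk]; omega
    · by_cases h3 : i.val ≤ k.val ∧ j.val ≤ k.val
      · by_cases h4 : k.val ≤ i.val + j.val
        · rw [hf3 k h1 h3.1 h3.2 h4, hf2 _ (by simp only [Fin.val_mk]; omega)
            (by simp only [Fin.val_mk]; omega) (by simp only [Fin.val_mk]; omega)]
          ext; simp only [Fin.val_mk]; omega
        · rw [hf4 k h1 h3.1 h3.2 h4, hf4 _ (by simp only [Fin.val_mk]; omega)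
            (by simp only [Fin.val_mk]; omega) (by simp only [Fin.val_mk]; omega)
            (by simp only [Fin.val_mk]; omega)]
          ext; simp only [Fin.val_mk]; omega
      · rw [hf5 k h1 h3, hf5 k h1 h3]
  refine Fintype.sum_bijective f hfinv.bijective _ _ (fun k => ?_)
  by_cases h1 : k.val ≤ i.val ∧ k.val ≤ j.val
  · by_cases h2 : m + k.val ≤ i.val + j.val
    · rw [hf1 k h1.1 h1.2 h2]
      simp only [Fin.val_mk]
      split_ifs <;>
        first
          | rfl
          | (exfalso; omega)
          | (simp only [zero_mul, mul_zero, add_zero, zero_add]; done)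
          | ((try simp only [zero_mul, mul_zero, add_zero, zero_add])
             first
               | rfl
               | (rw [mul_comm]; congr 1 <;> (first | rfl | (congr 1 <;> omega)))
               | (congr 1 <;> (rw [mul_comm]; congr 1 <;> (first | rfl | (congr 1 <;> omega)))))
    · rw [hf2 k h1.1 h1.2 h2]
      simp only [Fin.val_mk]
      split_ifs <;>
        first
          | rfl
          | (exfalso; omega)
          | (simp only [zero_mul, mul_zero, add_zero, zero_add]; done)
          | ((try simp only [zero_mul, mul_zero, add_zero, zero_add])
             first
               | rfl
               | (rw [mul_comm]; congr 1 <;> (first | rfl | (congr 1 <;> omega)))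
               | (congr 1 <;> (rw [mul_comm]; congr 1 <;> (first | rfl | (congr 1 <;> omega)))))
  · by_cases h3 : i.val ≤ k.val ∧ j.val ≤ k.val
    · by_cases h4 : k.val ≤ i.val + j.val
      · rw [hf3 k h1 h3.1 h3.2 h4]
        simp only [Fin.val_mk]
        split_ifs <;>
          first
            | rfl
            | (exfalso; omega)
            | (simp only [zero_mul, mul_zero, add_zero, zero_add]; done)
            | ((try simp only [zero_mul, mul_zero, add_zero, zero_add])
               first
                 | rfl
                 | (rw [mul_comm]; congr 1 <;> (first | rfl | (congr 1 <;> omega)))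
                 | (congr 1 <;> (rw [mul_comm]; congr 1 <;> (first | rfl | (congr 1 <;> omega)))))
      · rw [hf4 k h1 h3.1 h3.2 h4]
        simp only [Fin.val_mk]
        split_ifs <;>
          first
            | rfl
            | (exfalso; omega)
            | (simp only [zero_mul, mul_zero, add_zero, zero_add]; done)
            | ((try simp only [zero_mul, mul_zero, add_zero, zero_add])
               first
                 | rfl
                 | (rw [mul_comm]; congr 1 <;> (first | rfl | (congr 1 <;> omega)))
                 | (congr 1 <;> (rw [mul_comm]; congr 1 <;> (first | rfl | (congr 1 <;> omega)))))
    · rw [hf5 k h1 h3]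
      split_ifs <;>
        first
          | rfl
          | (exfalso; omega)
          | (simp only [zero_mul, mul_zero, add_zero, zero_add]; done)
          | ((try simp only [zero_mul, mul_zero, add_zero, zero_add])
             first
               | rfl
               | (rw [mul_comm]; congr 1 <;> (first | rfl | (congr 1 <;> omega)))
               | (congr 1 <;> (rw [mul_comm]; congr 1 <;> (first | rfl | (congr 1 <;> omega)))))


set_option maxHeartbeats 1000000 in
/-- The Toeplitz Bezoutian commuting identity: `B_T D_L⁻¹ D_U = D_U D_L⁻¹ B_T`,
where `B_T = D_L N_U − N_L D_U` and `D_L` is invertible (`d_1 ≠ 0`). -/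
theorem bezoutian_commute (m : ℕ) (n d : Fin (m + 1) → ℝ) (hd : d 0 ≠ 0)
    (NL DL NU DU BT : Matrix (Fin m) (Fin m) ℝ)
    (hNL : ∀ i j : Fin m, NL i j =
      if h : j.val ≤ i.val then n ⟨i.val - j.val, by omega⟩ else 0)
    (hDL : ∀ i j : Fin m, DL i j =
      if h : j.val ≤ i.val then d ⟨i.val - j.val, by omega⟩ else 0)
    (hNU : ∀ i j : Fin m, NU i j =
      if h : i.val ≤ j.val then n ⟨m + i.val - j.val, by omega⟩ else 0)
    (hDU : ∀ i j : Fin m, DU i j =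
      if h : i.val ≤ j.val then d ⟨m + i.val - j.val, by omega⟩ else 0)
    (hBT : BT = DL * NU - NL * DU) :
    BT * DL⁻¹ * DU = DU * DL⁻¹ * BT := by
  -- rewrite the entries via the ℕ-extended functions
  have hDL2 : ∀ a b : Fin m, DL a b =
      if b.val ≤ a.val then bezExt m d (a.val - b.val) else 0 := by
    intro a b; rw [hDL a b]
    by_cases h : b.val ≤ a.val
    · rw [dif_pos h, if_pos h, bezExt_eq m d _ (by omega)]
    · rw [dif_neg h, if_neg h]
  have hNL2 : ∀ a b : Fin m, NL a b =
      if b.val ≤ a.val then bezExt m n (a.val - b.val) else 0 := by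
    intro a b; rw [hNL a b]
    by_cases h : b.val ≤ a.val
    · rw [dif_pos h, if_pos h, bezExt_eq m n _ (by omega)]
    · rw [dif_neg h, if_neg h]
  have hDU2 : ∀ a b : Fin m, DU a b =
      if a.val ≤ b.val then bezExt m d (m + a.val - b.val) else 0 := by
    intro a b; rw [hDU a b]
    by_cases h : a.val ≤ b.val
    · rw [dif_pos h, if_pos h, bezExt_eq m d _ (by omega)]
    · rw [dif_neg h, if_neg h]
  have hNU2 : ∀ a b : Fin m, NU a b =
      if a.val ≤ b.val then bezExt m n (m + a.val - b.val) else 0 := by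
    intro a b; rw [hNU a b]
    by_cases h : a.val ≤ b.val
    · rw [dif_pos h, if_pos h, bezExt_eq m n _ (by omega)]
    · rw [dif_neg h, if_neg h]
  -- lower-triangular Toeplitz matrices commute
  have h1 : DL * NL = NL * DL := by
    ext a b
    rw [Matrix.mul_apply, Matrix.mul_apply]
    simp only [hDL2, hNL2]
    exact bez_lower m (bezExt m d) (bezExt m n) a b
  -- upper-triangular Toeplitz matrices commute
  have h2 : DU * NU = NU * DU := by
    ext a b
    rw [Matrix.mul_apply, Matrix.mul_apply]
    simp only [hDU2, hNU2]
    exact bez_upper m (bezExt m d) (bezExt m n) a b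
  -- Gohberg–Semencul identity
  have h3 : DL * NU + DU * NL = NU * DL + NL * DU := by
    ext a b
    simp only [Matrix.add_apply, Matrix.mul_apply]
    simp only [hDL2, hNL2, hDU2, hNU2]
    exact bez_gs m (bezExt m d) (bezExt m n) a b
  -- DL is invertible
  have hdet : IsUnit DL.det := by
    have htri : DL.BlockTriangular OrderDual.toDual := by
      intro a b hab
      have hab' : a < b := hab
      have hv : a.val < b.val := hab'
      rw [hDL2, if_neg (by omega)]
    rw [Matrix.det_of_lowerTriangular DL htri]
    have hdiag : ∀ a : Fin m, DL a a = d 0 := by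
      intro a
      rw [hDL2, if_pos le_rfl, Nat.sub_self, bezExt_eq m d 0 (Nat.zero_le m)]
      exact congrArg d (Fin.ext (by simp))
    rw [Finset.prod_congr rfl (fun a _ => hdiag a), Finset.prod_const]
    exact isUnit_iff_ne_zero.mpr (pow_ne_zero _ hd)
  have hl : DL * DL⁻¹ = 1 := Matrix.mul_nonsing_inv DL hdet
  have hcomm : NL * DL⁻¹ = DL⁻¹ * NL := by
    have e := congrArg (fun X => DL⁻¹ * (X * DL⁻¹)) h1
    rw [Matrix.mul_assoc DL NL DL⁻¹, Matrix.nonsing_inv_mul_cancel_left DL _ hdet,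
      Matrix.mul_assoc NL DL DL⁻¹, hl, Matrix.mul_one] at e
    exact e
  have hBT' : BT = NU * DL - DU * NL := by
    rw [hBT, sub_eq_sub_iff_add_eq_add]
    exact h3
  calc BT * DL⁻¹ * DU = (NU * DL - DU * NL) * DL⁻¹ * DU := by rw [hBT']
    _ = NU * (DL * DL⁻¹) * DU - DU * (NL * DL⁻¹) * DU := by
        rw [Matrix.sub_mul, Matrix.sub_mul, Matrix.mul_assoc NU DL DL⁻¹,
          Matrix.mul_assoc DU NL DL⁻¹]
    _ = NU * DU - DU * (DL⁻¹ * NL) * DU := by rw [hl, Matrix.mul_one, hcomm]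
    _ = DU * NU - DU * (DL⁻¹ * NL) * DU := by rw [← h2]
    _ = DU * DL⁻¹ * (DL * NU) - DU * DL⁻¹ * (NL * DU) := by
        congr 1
        · rw [Matrix.mul_assoc DU DL⁻¹ (DL * NU), Matrix.nonsing_inv_mul_cancel_left DL NU hdet]
        · rw [Matrix.mul_assoc DU DL⁻¹ (NL * DU), ← Matrix.mul_assoc DL⁻¹ NL DU,
            ← Matrix.mul_assoc DU (DL⁻¹ * NL) DU]
    _ = DU * DL⁻¹ * (DL * NU - NL * DU) := by rw [Matrix.mul_sub]
    _ = DU * DL⁻¹ * BT := by rw [← hBT]
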